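/- There is no strict arbitrage if and only if there exists a vector v ∈ ℝ^N with v ≥ 0 componentwise such that P = C v. -/

import Mathlib

open Matrix BigOperators Finset
open scoped RealInnerProductSpace

section FarkasAux

variable {E : Type*} [AddCommGroup E] [Module ℝ E]

/-- Carathéodory-type reduction for conic combinations: any nonnegative combination can be
rewritten as a nonnegative combination whose support indexes a linearly independent family. -/
lemma farkas_cara_aux {n : ℕ} (w : Fin n → E) :
    ∀ (k : ℕ) (v : Fin n → ℝ), (univ.filter (fun j => v j ≠ 0)).card ≤ k →
      (∀ j, 0 ≤ v j) →
      ∃ v' : Fin n → ℝ, (∀ j, 0 ≤ v' j) ∧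
        (∑ j, v' j • w j) = (∑ j, v j • w j) ∧
        LinearIndependent ℝ (fun j : {j // v' j ≠ 0} => w (j : Fin n)) := by
  intro k
  induction k with
  | zero =>
    intro v hcard hv
    have he : univ.filter (fun j => v j ≠ 0) = ∅ := card_eq_zero.mp (Nat.le_zero.mp hcard)
    have hE : IsEmpty {j // v j ≠ 0} := by
      constructor; rintro ⟨j, hj⟩
      have hmem : j ∈ univ.filter (fun j => v j ≠ 0) := by simp [hj]
      simp [he] at hmem
    exact ⟨v, hv, rfl, linearIndependent_empty_type⟩
  | succ k ih =>
    intro v hcard hv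
    by_cases hind : LinearIndependent ℝ (fun j : {j // v j ≠ 0} => w (j : Fin n))
    · exact ⟨v, hv, rfl, hind⟩
    · obtain ⟨g, hgsum, j₁, hj₁⟩ := Fintype.not_linearIndependent_iff.mp hind
      -- extend `g` to a coefficient vector on all of `Fin n`, supported in the support of `v`
      set c₀ : Fin n → ℝ := fun j => if h : v j ≠ 0 then g ⟨j, h⟩ else 0 with hc₀def
      have hsupp₀ : ∀ j, v j = 0 → c₀ j = 0 := fun j hj => by simp [hc₀def, hj]
      have hzero₀ : ∑ j, c₀ j • w j = 0 := by
        have h1 : ∑ j ∈ univ.filter (fun j => v j ≠ 0), c₀ j • w j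
            = ∑ j : {j // v j ≠ 0}, c₀ (j : Fin n) • w (j : Fin n) :=
          Finset.sum_subtype _ (by simp) _
        have h2 : ∀ j : {j // v j ≠ 0}, c₀ (j : Fin n) = g j := fun j => by
          simp [hc₀def, j.2]
        have h3 : ∑ j ∈ univ.filter (fun j => v j ≠ 0), c₀ j • w j = ∑ j, c₀ j • w j := by
          refine Finset.sum_subset (Finset.subset_univ _) ?_
          intro j _ hj
          have : v j = 0 := by simpa using hj
          simp [hsupp₀ j this]
        rw [← h3, h1]
        simp_rw [h2]
        exact hgsum
      have hne₀ : ∃ j, c₀ j ≠ 0 := ⟨j₁, by simpa [hc₀def, j₁.2] using hj₁⟩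
      -- get a coefficient vector with a positive entry
      obtain ⟨c, hcsupp, hczero, hcpos⟩ :
          ∃ c : Fin n → ℝ, (∀ j, v j = 0 → c j = 0) ∧ (∑ j, c j • w j = 0) ∧ ∃ j, 0 < c j := by
        by_cases hp : ∃ j, 0 < c₀ j
        · exact ⟨c₀, hsupp₀, hzero₀, hp⟩
        · push_neg at hp
          obtain ⟨j₂, hj₂⟩ := hne₀
          refine ⟨-c₀, fun j hj => by simp [hsupp₀ j hj], by
            simp [neg_smul, Finset.sum_neg_distrib, hzero₀], ⟨j₂, ?_⟩⟩
          have := lt_of_le_of_ne (hp j₂) hj₂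
          simpa using this
      -- minimize v j / c j over positive entries of c
      have hIne : (univ.filter (fun j => 0 < c j)).Nonempty := by
        obtain ⟨j, hj⟩ := hcpos
        exact ⟨j, by simp [hj]⟩
      obtain ⟨j₀, hj₀I, hj₀min⟩ :=
        Finset.exists_min_image (univ.filter (fun j => 0 < c j)) (fun j => v j / c j) hIne
      have hcj₀ : 0 < c j₀ := by simpa using hj₀I
      set t : ℝ := v j₀ / c j₀ with htdef
      have ht0 : 0 ≤ t := div_nonneg (hv j₀) hcj₀.le
      set v' : Fin n → ℝ := fun j => v j - t * c j with hv'def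
      have hv'nonneg : ∀ j, 0 ≤ v' j := by
        intro j
        by_cases hcj : 0 < c j
        · have hle : t ≤ v j / c j := hj₀min j (by simp [hcj])
          have : t * c j ≤ (v j / c j) * c j := mul_le_mul_of_nonneg_right hle hcj.le
          rw [div_mul_cancel₀ _ hcj.ne'] at this
          simp [hv'def]
          linarith
        · push_neg at hcj
          have : t * c j ≤ 0 := mul_nonpos_of_nonneg_of_nonpos ht0 hcj
          have := hv j
          simp [hv'def]
          linarith
      have hv'sum : ∑ j, v' j • w j = ∑ j, v j • w j := by
        simp only [hv'def, sub_smul, Finset.sum_sub_distrib]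
        have : ∑ x : Fin n, (t * c x) • w x = t • ∑ x : Fin n, c x • w x := by
          rw [Finset.smul_sum]
          exact Finset.sum_congr rfl fun x _ => (smul_smul t (c x) (w x)).symm
        rw [this, hczero, smul_zero, sub_zero]
      have hv'supp : ∀ j, v j = 0 → v' j = 0 := by
        intro j hj
        simp [hv'def, hj, hcsupp j hj]
      have hv'j₀ : v' j₀ = 0 := by
        simp [hv'def, htdef, div_mul_cancel₀ _ hcj₀.ne']
      -- the support strictly decreases
      have hsub : univ.filter (fun j => v' j ≠ 0) ⊂ univ.filter (fun j => v j ≠ 0) := by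
        refine Finset.ssubset_iff_of_subset ?_ |>.mpr ?_
        · intro j hj
          simp only [mem_filter, mem_univ, true_and] at hj ⊢
          intro h0
          exact hj (hv'supp j h0)
        · refine ⟨j₀, ?_, ?_⟩
          · simp only [mem_filter, mem_univ, true_and]
            intro h0
            exact hcj₀.ne' (hcsupp j₀ h0)
          · simp [hv'j₀]
      have hcard' : (univ.filter (fun j => v' j ≠ 0)).card ≤ k := by
        have := Finset.card_lt_card hsub
        omega
      obtain ⟨v'', h1, h2, h3⟩ := ih v' hcard' hv'nonneg
      exact ⟨v'', h1, h2.trans hv'sum, h3⟩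

/-- The conic hull of finitely many vectors in Euclidean space is closed. -/
lemma farkas_cone_isClosed {m n : ℕ} (w : Fin n → EuclideanSpace ℝ (Fin m)) :
    IsClosed {x : EuclideanSpace ℝ (Fin m) |
      ∃ v : Fin n → ℝ, (∀ j, 0 ≤ v j) ∧ x = ∑ j, v j • w j} := by
  have hrw : {x : EuclideanSpace ℝ (Fin m) |
        ∃ v : Fin n → ℝ, (∀ j, 0 ≤ v j) ∧ x = ∑ j, v j • w j}
      = ⋃ (T : Finset (Fin n))
          (_ : LinearIndependent ℝ (fun j : T => w (j : Fin n))),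
          {x : EuclideanSpace ℝ (Fin m) |
            ∃ v : Fin n → ℝ, (∀ j, 0 ≤ v j) ∧ (∀ j ∉ T, v j = 0) ∧ x = ∑ j, v j • w j} := by
    ext x
    simp only [Set.mem_setOf_eq, Set.mem_iUnion]
    constructor
    · rintro ⟨v, hv, rfl⟩
      obtain ⟨v', hv', hsum, hind⟩ := farkas_cara_aux w _ v le_rfl hv
      refine ⟨univ.filter (fun j => v' j ≠ 0), ?_, v', hv', ?_, hsum.symm⟩
      · letI e : {j // j ∈ univ.filter (fun j => v' j ≠ 0)} ≃ {j // v' j ≠ 0} :=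
          Equiv.subtypeEquivRight (fun j => by simp)
        have hfe : (fun j : {j // v' j ≠ 0} => w (j : Fin n)) ∘ e
            = fun j : {j // j ∈ univ.filter (fun j => v' j ≠ 0)} => w (j : Fin n) := by
          funext j
          rfl
        exact (linearIndependent_equiv' e hfe).mpr hind
      · intro j hj
        by_contra h0
        exact hj (by simp [h0])
    · rintro ⟨T, hT, v, hv, hvT, rfl⟩
      exact ⟨v, hv, rfl⟩
  rw [hrw]
  refine isClosed_iUnion_of_finite fun T => ?_
  by_cases hT : LinearIndependent ℝ (fun j : T => w (j : Fin n))
  · simp only [hT, Set.iUnion_true]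
    -- the cone over a linearly independent family is closed
    let φ : (T → ℝ) →ₗ[ℝ] EuclideanSpace ℝ (Fin m) :=
      { toFun := fun u => ∑ j : T, u j • w (j : Fin n)
        map_add' := by
          intro u₁ u₂
          simp [add_smul, Finset.sum_add_distrib]
        map_smul' := by
          intro r u
          simp [smul_smul, Finset.smul_sum] }
      -- injectivity
    have hker : LinearMap.ker φ = ⊥ := by
      rw [LinearMap.ker_eq_bot']
      intro u hu
      have := Fintype.linearIndependent_iff.mp hT u hu
      funext j
      exact this j
    have hemb := LinearMap.isClosedEmbedding_of_injective hker
    have himg : {x : EuclideanSpace ℝ (Fin m) |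
          ∃ v : Fin n → ℝ, (∀ j, 0 ≤ v j) ∧ (∀ j ∉ T, v j = 0) ∧ x = ∑ j, v j • w j}
        = φ '' {u : T → ℝ | ∀ j, 0 ≤ u j} := by
      ext x
      simp only [Set.mem_setOf_eq, Set.mem_image]
      constructor
      · rintro ⟨v, hv, hvT, rfl⟩
        refine ⟨fun j => v j, fun j => hv j, ?_⟩
        show ∑ j : T, v (j : Fin n) • w (j : Fin n) = _
        rw [Finset.sum_coe_sort T (fun j => v j • w j)]
        exact Finset.sum_subset (Finset.subset_univ _) fun j _ hj => by
          rw [hvT j hj, zero_smul]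
      · rintro ⟨u, hu, rfl⟩
        refine ⟨fun j => if h : j ∈ T then u ⟨j, h⟩ else 0, ?_, ?_, ?_⟩
        · intro j
          by_cases h : j ∈ T
          · simp [h, hu]
          · simp [h]
        · intro j hj
          simp [hj]
        · show ∑ j : T, u j • w (j : Fin n)
              = ∑ j, (if h : j ∈ T then u ⟨j, h⟩ else 0) • w j
          have h1 : ∑ j, (if h : j ∈ T then u ⟨j, h⟩ else 0) • w j
              = ∑ j ∈ T, (if h : j ∈ T then u ⟨j, h⟩ else 0) • w j :=
            (Finset.sum_subset (Finset.subset_univ T) fun j _ hj => by simp [hj]).symm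
          rw [h1, ← Finset.sum_coe_sort T
            (fun j => (if h : j ∈ T then u ⟨j, h⟩ else 0) • w j)]
          refine Finset.sum_congr rfl fun j _ => ?_
          rw [dif_pos j.2]
    rw [himg]
    refine hemb.isClosedMap _ ?_
    have : {u : T → ℝ | ∀ j, 0 ≤ u j} = ⋂ j, {u : T → ℝ | 0 ≤ u j} := by
      ext u; simp
    rw [this]
    exact isClosed_iInter fun j => isClosed_le continuous_const (continuous_apply j)
  · simp [hT]

end FarkasAux

/-- Farkas-type result: there is no strict arbitrage iff there exists a
componentwise nonnegative vector `v` with `P = C v`. -/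
theorem stmt_7 (M N : ℕ) (hM : 1 ≤ M) (hN : 1 ≤ N)
    (P : Fin M → ℝ) (C : Matrix (Fin M) (Fin N) ℝ) :
    (¬ ∃ q : Fin M → ℝ, q ⬝ᵥ P < 0 ∧ ∀ j, 0 ≤ Matrix.vecMul q C j) ↔
    (∃ v : Fin N → ℝ, (∀ j, 0 ≤ v j) ∧ P = Matrix.mulVec C v) := by
  constructor
  · intro hno
    by_contra hnv
    -- P is not in the closed convex cone generated by the columns of C
    set w : Fin N → EuclideanSpace ℝ (Fin M) := fun j => WithLp.toLp 2 (fun i => C i j) with hwdef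
    have hmul : ∀ v : Fin N → ℝ, Matrix.mulVec C v = fun i => (∑ j, v j • w j) i := by
      intro v
      funext i
      have hap : (∑ j, v j • w j) i = ∑ j, (v j • w j) i := by
        rw [WithLp.ofLp_sum]; exact Finset.sum_apply i Finset.univ fun j => (v j • w j).ofLp
      rw [hap]
      simp [Matrix.mulVec, dotProduct, hwdef, mul_comm]
    set S : Set (EuclideanSpace ℝ (Fin M)) :=
      {x | ∃ v : Fin N → ℝ, (∀ j, 0 ≤ v j) ∧ x = ∑ j, v j • w j} with hSdef
    have hSclosed : IsClosed S := farkas_cone_isClosed w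
    -- S is a convex cone
    set K : ConvexCone ℝ (EuclideanSpace ℝ (Fin M)) :=
      { carrier := S
        smul_mem' := by
          rintro c hc x ⟨v, hv, rfl⟩
          exact ⟨fun j => c * v j, fun j => mul_nonneg hc.le (hv j), by
            simp [Finset.smul_sum, smul_smul]⟩
        add_mem' := by
          rintro x ⟨v, hv, rfl⟩ y ⟨u, hu, rfl⟩
          exact ⟨fun j => v j + u j, fun j => add_nonneg (hv j) (hu j), by
            simp [add_smul, Finset.sum_add_distrib]⟩ } with hKdef
    have hKne : (K : Set (EuclideanSpace ℝ (Fin M))).Nonempty :=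
      ⟨0, ⟨fun _ => 0, fun _ => le_rfl, by simp⟩⟩
    have hPnot : (WithLp.toLp 2 P : EuclideanSpace ℝ (Fin M)) ∉ K := by
      rintro ⟨v, hv, hP⟩
      exact hnv ⟨v, hv, by
        rw [hmul v]; exact funext fun i => congrArg (fun x : EuclideanSpace ℝ (Fin M) => x i) hP⟩
    let Kp : ProperCone ℝ (EuclideanSpace ℝ (Fin M)) :=
      { toSubmodule := K.toPointedCone (ConvexCone.Pointed.of_nonempty_of_isClosed hKne hSclosed)
        isClosed' := hSclosed }
    obtain ⟨y, hy1, hy2⟩ :=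
      ProperCone.hyperplane_separation' Kp (x₀ := WithLp.toLp 2 P) hPnot
    apply hno
    refine ⟨WithLp.ofLp y, ?_, ?_⟩
    · have hyP : (inner ℝ (WithLp.toLp 2 P : EuclideanSpace ℝ (Fin M)) y : ℝ) = y.ofLp ⬝ᵥ P := by
        simp [PiLp.inner_apply, RCLike.inner_apply, dotProduct, mul_comm]
      rwa [hyP] at hy2
    · intro j
      have hcol : (w j) ∈ K := by
        refine ⟨fun j' => if j' = j then 1 else 0, fun j' => by positivity, ?_⟩
        simp [Finset.sum_ite_eq']
      have := hy1 (w j) hcol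
      have hinner : (inner ℝ (w j) y : ℝ) = Matrix.vecMul y.ofLp C j := by
        simp [PiLp.inner_apply, RCLike.inner_apply, Matrix.vecMul, dotProduct,
          hwdef, mul_comm]
      rwa [hinner] at this
  · rintro ⟨v, hv, hP⟩ ⟨q, hq1, hq2⟩
    rw [hP, dotProduct_mulVec] at hq1
    have : 0 ≤ Matrix.vecMul q C ⬝ᵥ v :=
      Finset.sum_nonneg fun j _ => mul_nonneg (hq2 j) (hv j)
    linarith
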